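/- arXiv:2104.03580 — 2 statements merged into one kernel-verified Lean document; each statement's English description precedes it below -/
import Mathlib

section
/- Let T, T̂ ⊆ {1,…,N} with T ⊆ T̂ (so T̂^c ⊆ T^c), let 0 ≤ ω ≤ 1, and let e, h ∈ ℝ^N satisfy ω‖e_{T̂} + h_{T̂}‖₁ + ‖e_{T̂^c} + h_{T̂^c}‖₁ ≤ ω‖e_{T̂}‖₁ + ‖e_{T̂^c}‖₁. Then ω‖h_{T^c}‖₁ + (1−ω)‖h_{T̂^c}‖₁ ≤ ω‖h_T‖₁ + 2(ω‖e_{T^c}‖₁ + (1−ω)‖e_{T̂^c}‖₁). -/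
/-- ℓ₁ norm on `ℝ^N`. -/
noncomputable def l1 {N : ℕ} (x : Fin N → ℝ) : ℝ := ∑ i, |x i|

/-- ℓ₂ (Euclidean) norm on `ℝ^N`. -/
noncomputable def l2 {N : ℕ} (x : Fin N → ℝ) : ℝ := Real.sqrt (∑ i, (x i) ^ 2)

/-- Restriction of a vector to an index set (zero outside the set). -/
def restr {N : ℕ} (S : Finset (Fin N)) (x : Fin N → ℝ) : Fin N → ℝ :=
  fun i => if i ∈ S then x i else 0

lemma restr_add' {N : ℕ} (S : Finset (Fin N)) (x y : Fin N → ℝ) :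
    restr S x + restr S y = restr S (x + y) := by
  funext i
  simp only [restr, Pi.add_apply]
  split <;> simp

lemma l1_union {N : ℕ} (A B : Finset (Fin N)) (hAB : Disjoint A B) (x : Fin N → ℝ) :
    l1 (restr (A ∪ B) x) = l1 (restr A x) + l1 (restr B x) := by
  unfold l1
  rw [← Finset.sum_add_distrib]
  apply Finset.sum_congr rfl
  intro i _
  simp only [restr, Finset.mem_union]
  by_cases hA : i ∈ A
  · have hB : i ∉ B := Finset.disjoint_left.mp hAB hA
    simp [hA, hB]
  · by_cases hB : i ∈ B <;> simp [hA, hB]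

lemma l1_triangle {N : ℕ} (x y : Fin N → ℝ) : l1 (x + y) ≤ l1 x + l1 y := by
  unfold l1
  rw [← Finset.sum_add_distrib]
  exact Finset.sum_le_sum fun i _ => abs_add_le _ _

lemma l1_lower {N : ℕ} (x y : Fin N → ℝ) : l1 y - l1 x ≤ l1 (x + y) := by
  have := l1_triangle (x + y) (-x)
  have hx : l1 (-x) = l1 x := by unfold l1; simp
  have hy : (x + y) + (-x) = y := by ring
  rw [hy, hx] at this
  linarith

/-- If `T ⊆ T̂`, `0 ≤ ω ≤ 1`, and
`ω‖e_{T̂} + h_{T̂}‖₁ + ‖e_{T̂ᶜ} + h_{T̂ᶜ}‖₁ ≤ ω‖e_{T̂}‖₁ + ‖e_{T̂ᶜ}‖₁`, then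
`ω‖h_{Tᶜ}‖₁ + (1−ω)‖h_{T̂ᶜ}‖₁ ≤ ω‖h_T‖₁ + 2(ω‖e_{Tᶜ}‖₁ + (1−ω)‖e_{T̂ᶜ}‖₁)`. -/
theorem stmt11 (N : ℕ) (T That : Finset (Fin N)) (hTT : T ⊆ That)
    (ω : ℝ) (hω0 : 0 ≤ ω) (hω1 : ω ≤ 1) (e h : Fin N → ℝ)
    (hyp : ω * l1 (restr That e + restr That h) + l1 (restr Thatᶜ e + restr Thatᶜ h) ≤
      ω * l1 (restr That e) + l1 (restr Thatᶜ e)) :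
    ω * l1 (restr Tᶜ h) + (1 - ω) * l1 (restr Thatᶜ h) ≤
      ω * l1 (restr T h) +
        2 * (ω * l1 (restr Tᶜ e) + (1 - ω) * l1 (restr Thatᶜ e)) := by
  have hThat : That = T ∪ (That \ T) := by
    rw [Finset.union_sdiff_of_subset hTT]
  have hTc : Tᶜ = (That \ T) ∪ Thatᶜ := by
    ext i
    simp only [Finset.mem_compl, Finset.mem_union, Finset.mem_sdiff]
    by_cases h1 : i ∈ T <;> by_cases h2 : i ∈ That <;> simp [h1, h2]
    · exact h2 (hTT h1)
  have hd1 : Disjoint T (That \ T) := Finset.disjoint_sdiff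
  have hd2 : Disjoint (That \ T) Thatᶜ := by
    rw [Finset.disjoint_left]
    intro i hi hic
    exact (Finset.mem_compl.mp hic) (Finset.mem_sdiff.mp hi).1
  -- decompositions
  have dTe : l1 (restr That e) = l1 (restr T e) + l1 (restr (That \ T) e) := by
    conv_lhs => rw [hThat]
    exact l1_union _ _ hd1 e
  have dTh : l1 (restr That h) = l1 (restr T h) + l1 (restr (That \ T) h) := by
    conv_lhs => rw [hThat]
    exact l1_union _ _ hd1 h
  have dce : l1 (restr Tᶜ e) = l1 (restr (That \ T) e) + l1 (restr Thatᶜ e) := by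
    conv_lhs => rw [hTc]
    exact l1_union _ _ hd2 e
  have dch : l1 (restr Tᶜ h) = l1 (restr (That \ T) h) + l1 (restr Thatᶜ h) := by
    conv_lhs => rw [hTc]
    exact l1_union _ _ hd2 h
  -- lower bounds on the l1 norms of sums
  have key1 : l1 (restr That e + restr That h) =
      l1 (restr T e + restr T h) + l1 (restr (That \ T) e + restr (That \ T) h) := by
    rw [restr_add', restr_add', restr_add']
    conv_lhs => rw [hThat]
    exact l1_union _ _ hd1 (e + h)
  have lb1 : l1 (restr T e) - l1 (restr T h) ≤ l1 (restr T e + restr T h) := by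
    have := l1_lower (restr T h) (restr T e)
    have hc : restr T h + restr T e = restr T e + restr T h := by ring
    rw [hc] at this; linarith
  have lb2 : l1 (restr (That \ T) h) - l1 (restr (That \ T) e) ≤
      l1 (restr (That \ T) e + restr (That \ T) h) := l1_lower _ _
  have lb3 : l1 (restr Thatᶜ h) - l1 (restr Thatᶜ e) ≤
      l1 (restr Thatᶜ e + restr Thatᶜ h) := l1_lower _ _
  have big : l1 (restr T e) - l1 (restr T h) + (l1 (restr (That \ T) h) - l1 (restr (That \ T) e))
      ≤ l1 (restr That e + restr That h) := by
    rw [key1]; linarith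
  have bigω : ω * (l1 (restr T e) - l1 (restr T h) +
      (l1 (restr (That \ T) h) - l1 (restr (That \ T) e)))
      ≤ ω * l1 (restr That e + restr That h) := by
    exact mul_le_mul_of_nonneg_left big hω0
  nlinarith [bigω, lb3, hyp, dTe, dTh, dce, dch]
end

section
/- (Weighted ℓ₁ recovery error bound.) Let the measurement model be y = Hx* + e with H ∈ ℝ^{N×n} full column rank, N = Tm, smallest singular value σ̲ > 0, and singular value decomposition H = U [Σ₁; 0] Vᵀ with U = [U₁ U₂]. Suppose U₂ᵀ satisfies the RIP: (1−δ_s)‖v‖₂² ≤ ‖U₂ᵀ v‖₂² ≤ (1+δ_s)‖v‖₂² for all s-sparse v, for s ∈ {a·km, (a+1)·km}. Let T = supp-estimate set with |T̂_η| = ρ·km containing the true attack support T of size km (perfect pruned prior), let x̂ solve min_z ‖y − Hz‖_{1,w} with weights w_j = ω on T̂_η and w_j = 1 on T̂_η^c, 0 ≤ ω ≤ 1. If a ≥ max{ρ−1, 1} is an integer and δ_{a·km} + C·δ_{(a+1)·km} < C − 1 with C = a / (ω + (1−ω)√(ρ−1))², then ‖x̂ − x*‖₂ ≤ (C₁/(σ̲√(km)))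 · (ω·σ_{km}(e) + (1−ω)‖e_{T̂_η^c}‖₁), where C₁ = 2a^{-1/2}(√(1−δ_{(a+1)km}) + √(1+δ_{akm})) / (√(1−δ_{(a+1)km}) − (1/C)·√(1+δ_{akm})) and σ_{km}(e) = ‖e_{T^c}‖₁ is the best km-sparse approximation error of e. -/
open scoped Classical in
/-- Number of nonzero entries (the "ℓ₀ norm") of a vector. -/
noncomputable def supp0 {N : ℕ} (v : Fin N → ℝ) : ℕ :=
  (Finset.univ.filter fun i => v i ≠ 0).card

open Finset

lemma l2_nonneg {N : ℕ} (x : Fin N → ℝ) : 0 ≤ l2 x := Real.sqrt_nonneg _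

lemma l1_nonneg {N : ℕ} (x : Fin N → ℝ) : 0 ≤ l1 x :=
  Finset.sum_nonneg fun i _ => abs_nonneg _

lemma l2_sq {N : ℕ} (x : Fin N → ℝ) : (l2 x) ^ 2 = ∑ i, (x i) ^ 2 :=
  Real.sq_sqrt (Finset.sum_nonneg fun i _ => sq_nonneg _)

lemma le_of_sq_le_sq' {x y : ℝ} (hy : 0 ≤ y) (hx : 0 ≤ x) (h : x ^ 2 ≤ y ^ 2) : x ≤ y := by
  nlinarith

lemma l2_neg {N : ℕ} (x : Fin N → ℝ) : l2 (fun i => -(x i)) = l2 x := by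
  unfold l2; congr 1; exact Finset.sum_congr rfl fun i _ => by ring

lemma l2_add_le {N : ℕ} (x y : Fin N → ℝ) : l2 (x + y) ≤ l2 x + l2 y := by
  have hcs : ∑ i, x i * y i ≤ l2 x * l2 y := by
    have h := Finset.sum_mul_sq_le_sq_mul_sq Finset.univ x y
    calc ∑ i, x i * y i ≤ |∑ i, x i * y i| := le_abs_self _
      _ = Real.sqrt ((∑ i, x i * y i) ^ 2) := (Real.sqrt_sq_eq_abs _).symm
      _ ≤ Real.sqrt ((∑ i, (x i) ^ 2) * ∑ i, (y i) ^ 2) := Real.sqrt_le_sqrt h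
      _ = l2 x * l2 y := by
          rw [Real.sqrt_mul (Finset.sum_nonneg fun i _ => sq_nonneg _)]; rfl
  have h1 : (∑ i, (x i + y i) ^ 2) ≤ (l2 x + l2 y) ^ 2 := by
    have e1 : ∑ i, (x i + y i) ^ 2 = (∑ i, (x i)^2) + 2 * (∑ i, x i * y i) + ∑ i, (y i)^2 := by
      rw [show (∑ i, (x i + y i) ^ 2) = ∑ i, ((x i)^2 + (2 * (x i * y i) + (y i)^2)) from
        Finset.sum_congr rfl fun i _ => by ring,
        Finset.sum_add_distrib, Finset.sum_add_distrib, ← Finset.mul_sum]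
      ring
    rw [e1, ← l2_sq x, ← l2_sq y]
    nlinarith [l2_nonneg x, l2_nonneg y]
  have : l2 (x + y) = Real.sqrt (∑ i, (x i + y i) ^ 2) := by
    unfold l2; congr 1
  rw [this]
  calc Real.sqrt (∑ i, (x i + y i) ^ 2) ≤ Real.sqrt ((l2 x + l2 y) ^ 2) := Real.sqrt_le_sqrt h1
    _ = l2 x + l2 y := Real.sqrt_sq (add_nonneg (l2_nonneg x) (l2_nonneg y))

lemma abs_restr {N : ℕ} (S : Finset (Fin N)) (x : Fin N → ℝ) (i : Fin N) :
    |restr S x i| = if i ∈ S then |x i| else 0 := by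
  unfold restr; split <;> simp

lemma l1_restr {N : ℕ} (S : Finset (Fin N)) (x : Fin N → ℝ) :
    l1 (restr S x) = ∑ i ∈ S, |x i| := by
  unfold l1
  rw [show (∑ i, |restr S x i|) = ∑ i, if i ∈ S then |x i| else 0 from
    Finset.sum_congr rfl fun i _ => abs_restr S x i, Finset.sum_ite_mem, Finset.univ_inter]

lemma l2_sq_restr {N : ℕ} (S : Finset (Fin N)) (x : Fin N → ℝ) :
    (l2 (restr S x)) ^ 2 = ∑ i ∈ S, (x i) ^ 2 := by
  rw [l2_sq]
  rw [show (∑ i, (restr S x i) ^ 2) = ∑ i, if i ∈ S then (x i) ^ 2 else 0 from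
    Finset.sum_congr rfl fun i _ => by unfold restr; split <;> simp,
    Finset.sum_ite_mem, Finset.univ_inter]

lemma l2_restr_mono {N : ℕ} {S T : Finset (Fin N)} (h : S ⊆ T) (x : Fin N → ℝ) :
    l2 (restr S x) ≤ l2 (restr T x) := by
  apply le_of_sq_le_sq' (l2_nonneg _) (l2_nonneg _)
  rw [l2_sq_restr, l2_sq_restr]
  exact Finset.sum_le_sum_of_subset_of_nonneg h fun i _ _ => sq_nonneg _

lemma l1_restr_le {N : ℕ} (S : Finset (Fin N)) (x : Fin N → ℝ) :
    l1 (restr S x) ≤ Real.sqrt S.card * l2 (restr S x) := by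
  apply le_of_sq_le_sq' (mul_nonneg (Real.sqrt_nonneg _) (l2_nonneg _)) (l1_nonneg _)
  rw [mul_pow, Real.sq_sqrt (Nat.cast_nonneg _), l2_sq_restr, l1_restr]
  calc (∑ i ∈ S, |x i|) ^ 2 ≤ S.card * ∑ i ∈ S, |x i| ^ 2 :=
        sq_sum_le_card_mul_sum_sq
    _ = S.card * ∑ i ∈ S, (x i) ^ 2 := by
        congr 1; exact Finset.sum_congr rfl fun i _ => sq_abs _

open scoped Classical in
lemma supp0_eq {N : ℕ} (v : Fin N → ℝ) :
    supp0 v = (Finset.univ.filter fun i => v i ≠ 0).card := rfl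

lemma supp0_le_card {N : ℕ} (S : Finset (Fin N)) (v : Fin N → ℝ)
    (h : ∀ i, v i ≠ 0 → i ∈ S) : supp0 v ≤ S.card := by
  classical
  rw [supp0_eq]
  apply Finset.card_le_card
  intro i hi
  simp only [Finset.mem_filter] at hi
  exact h i hi.2

lemma supp0_restr {N : ℕ} (S : Finset (Fin N)) (v : Fin N → ℝ) :
    supp0 (restr S v) ≤ S.card := by
  apply supp0_le_card
  intro i hi
  unfold restr at hi
  by_contra h
  simp [h] at hi

lemma sum_sq_le_supp0_mul {N : ℕ} (v : Fin N → ℝ) (B : ℝ) (hB : ∀ i, |v i| ≤ B) :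
    ∑ i, (v i) ^ 2 ≤ (supp0 v : ℝ) * B ^ 2 := by
  classical
  rw [supp0_eq]
  rw [← Finset.sum_filter_of_ne (p := fun i => v i ≠ 0)
    (fun i _ hne => fun h0 => hne (by rw [h0]; ring))]
  calc ∑ i ∈ Finset.univ.filter (fun i => v i ≠ 0), (v i) ^ 2
      ≤ ∑ _i ∈ Finset.univ.filter (fun i => v i ≠ 0), B ^ 2 := by
        apply Finset.sum_le_sum
        intro i _
        calc (v i)^2 = |v i|^2 := (sq_abs _).symm
          _ ≤ B ^ 2 := by
              have := hB i; nlinarith [abs_nonneg (v i)]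
    _ = ((Finset.univ.filter fun i => v i ≠ 0).card : ℝ) * B ^ 2 := by
        rw [Finset.sum_const, nsmul_eq_mul]

/-- there is a subset of `A` of cardinality `r` on which `|v|` attains its largest values. -/
lemma exists_top_subset {N : ℕ} (A : Finset (Fin N)) (v : Fin N → ℝ) (r : ℕ)
    (hr : r ≤ A.card) :
    ∃ S : Finset (Fin N), S ⊆ A ∧ S.card = r ∧
      ∀ i ∈ S, ∀ j ∈ A \ S, |v j| ≤ |v i| := by
  classical
  obtain ⟨S, hSmem, hmax⟩ := Finset.exists_max_image (A.powersetCard r)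
    (fun S => ∑ i ∈ S, |v i|) (Finset.powersetCard_nonempty.2 hr)
  rw [Finset.mem_powersetCard] at hSmem
  refine ⟨S, hSmem.1, hSmem.2, ?_⟩
  intro i hi j hj
  rw [Finset.mem_sdiff] at hj
  by_contra hlt
  push_neg at hlt
  set S' : Finset (Fin N) := insert j (S.erase i) with hS'
  have hjS : j ∉ S.erase i := fun h => hj.2 (Finset.mem_of_mem_erase h)
  have hcard' : S'.card = r := by
    rw [hS', Finset.card_insert_of_notMem hjS, Finset.card_erase_of_mem hi, hSmem.2]
    have : 1 ≤ r := by
      rw [← hSmem.2]; exact Finset.card_pos.2 ⟨i, hi⟩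
    omega
  have hsub' : S' ⊆ A := by
    intro x hx
    rw [hS', Finset.mem_insert] at hx
    rcases hx with rfl | hx
    · exact hj.1
    · exact hSmem.1 (Finset.mem_of_mem_erase hx)
  have hmem' : S' ∈ A.powersetCard r := Finset.mem_powersetCard.2 ⟨hsub', hcard'⟩
  have hsum' : ∑ x ∈ S', |v x| = |v j| + (∑ x ∈ S, |v x| - |v i|) := by
    rw [hS', Finset.sum_insert hjS, Finset.sum_erase_eq_sub hi]
  have := hmax S' hmem'
  rw [hsum'] at this
  linarith

/-- domination: the sum of squares over any small subset of `A` is at most the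
sum of squares over a top subset. -/
lemma sum_sq_dominate {N : ℕ} (v : Fin N → ℝ) (A S T1 : Finset (Fin N))
    (hS : S ⊆ A) (hcard : S.card ≤ T1.card)
    (htop : ∀ i ∈ T1, ∀ j ∈ A \ T1, |v j| ≤ |v i|) :
    ∑ i ∈ S, (v i) ^ 2 ≤ ∑ i ∈ T1, (v i) ^ 2 := by
  classical
  have hsplitS : ∑ i ∈ S ∩ T1, (v i)^2 + ∑ i ∈ S \ T1, (v i)^2 = ∑ i ∈ S, (v i)^2 :=
    Finset.sum_inter_add_sum_sdiff S T1 _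
  have hsplitT : ∑ i ∈ T1 ∩ S, (v i)^2 + ∑ i ∈ T1 \ S, (v i)^2 = ∑ i ∈ T1, (v i)^2 :=
    Finset.sum_inter_add_sum_sdiff T1 S _
  have hSc : (S ∩ T1).card + (S \ T1).card = S.card := Finset.card_inter_add_card_sdiff S T1
  have hTc : (T1 ∩ S).card + (T1 \ S).card = T1.card := Finset.card_inter_add_card_sdiff T1 S
  have hic : (S ∩ T1).card = (T1 ∩ S).card := by rw [Finset.inter_comm]
  have hdc : (S \ T1).card ≤ (T1 \ S).card := by omega
  have hkey : ∑ i ∈ S \ T1, (v i)^2 ≤ ∑ i ∈ T1 \ S, (v i)^2 := by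
    rcases Finset.eq_empty_or_nonempty (S \ T1) with he | hne
    · rw [he, Finset.sum_empty]
      exact Finset.sum_nonneg fun i _ => sq_nonneg _
    · have hTne : (T1 \ S).Nonempty := by
        rw [← Finset.card_pos]
        have := Finset.card_pos.2 hne
        omega
      obtain ⟨j0, hj0, hj0min⟩ := Finset.exists_min_image (T1 \ S) (fun i => (v i)^2) hTne
      calc ∑ i ∈ S \ T1, (v i)^2 ≤ ∑ _i ∈ S \ T1, (v j0)^2 := by
            apply Finset.sum_le_sum
            intro i hi
            have hiA : i ∈ A \ T1 := by
              rw [Finset.mem_sdiff] at hi ⊢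
              exact ⟨hS hi.1, hi.2⟩
            have := htop j0 (Finset.mem_sdiff.1 hj0).1 i hiA
            calc (v i)^2 = |v i|^2 := (sq_abs _).symm
              _ ≤ |v j0|^2 := by nlinarith [abs_nonneg (v i)]
              _ = (v j0)^2 := sq_abs _
        _ = ((S \ T1).card : ℝ) * (v j0)^2 := by rw [Finset.sum_const, nsmul_eq_mul]
        _ ≤ ((T1 \ S).card : ℝ) * (v j0)^2 := by
            apply mul_le_mul_of_nonneg_right _ (sq_nonneg _)
            exact_mod_cast hdc
        _ ≤ ∑ i ∈ T1 \ S, (v i)^2 := by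
            rw [← nsmul_eq_mul]
            exact Finset.card_nsmul_le_sum _ _ _ fun i hi => hj0min i hi
  have hmono : ∑ i ∈ S ∩ T1, (v i)^2 ≤ ∑ i ∈ T1 ∩ S, (v i)^2 := le_of_eq (by rw [Finset.inter_comm])
  linarith

lemma rip_sqrt {N K : ℕ} (A : Matrix (Fin K) (Fin N) ℝ) {c : ℝ} (hc : 0 ≤ c)
    {v : Fin N → ℝ} (h : (l2 (A.mulVec v)) ^ 2 ≤ c * (l2 v) ^ 2) :
    l2 (A.mulVec v) ≤ Real.sqrt c * l2 v := by
  apply le_of_sq_le_sq' (mul_nonneg (Real.sqrt_nonneg _) (l2_nonneg _)) (l2_nonneg _)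
  rwa [mul_pow, Real.sq_sqrt hc]

/-- Tail bound: if `A` satisfies the RIP upper bound at sparsity `s`, then for any vector `g`
with `‖g‖∞ ≤ B`, `‖A g‖₂ ≤ √c (√s B + ‖g‖₁/√s)`. -/
lemma tail_bound {N K : ℕ} (A : Matrix (Fin K) (Fin N) ℝ) (c : ℝ) (hc : 0 ≤ c)
    (s : ℕ) (hs : 1 ≤ s)
    (hRIP : ∀ v : Fin N → ℝ, supp0 v ≤ s → (l2 (A.mulVec v)) ^ 2 ≤ c * (l2 v) ^ 2) :
    ∀ M : ℕ, ∀ g : Fin N → ℝ, ∀ B : ℝ, supp0 g ≤ M → 0 ≤ B → (∀ i, |g i| ≤ B) →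
      l2 (A.mulVec g) ≤ Real.sqrt c * (Real.sqrt s * B + l1 g / Real.sqrt s) := by
  classical
  intro M
  induction M using Nat.strong_induction_on with
  | _ M ih =>
    intro g B hgM hB hgB
    have hsR : (0:ℝ) < Real.sqrt s := Real.sqrt_pos.2 (by exact_mod_cast hs)
    have hcR : (0:ℝ) ≤ Real.sqrt c := Real.sqrt_nonneg _
    by_cases hcase : supp0 g ≤ s
    · -- g itself is s-sparse
      have h1 := rip_sqrt A hc (hRIP g hcase)
      have h2 : l2 g ≤ Real.sqrt s * B := by
        apply le_of_sq_le_sq' (mul_nonneg hsR.le hB) (l2_nonneg _)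
        rw [mul_pow, Real.sq_sqrt (Nat.cast_nonneg _), l2_sq]
        calc ∑ i, (g i)^2 ≤ (supp0 g : ℝ) * B ^ 2 := sum_sq_le_supp0_mul g B hgB
          _ ≤ (s : ℝ) * B ^ 2 := by
              apply mul_le_mul_of_nonneg_right _ (sq_nonneg _)
              exact_mod_cast hcase
      have h3 : 0 ≤ l1 g / Real.sqrt s := div_nonneg (l1_nonneg _) hsR.le
      calc l2 (A.mulVec g) ≤ Real.sqrt c * l2 g := h1
        _ ≤ Real.sqrt c * (Real.sqrt s * B) := mul_le_mul_of_nonneg_left h2 hcR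
        _ ≤ Real.sqrt c * (Real.sqrt s * B + l1 g / Real.sqrt s) := by nlinarith
    · push_neg at hcase
      set Sg : Finset (Fin N) := Finset.univ.filter (fun i => g i ≠ 0) with hSg
      have hSgcard : Sg.card = supp0 g := by
        rw [supp0_eq]
      obtain ⟨S1, hS1sub, hS1card, htop⟩ := exists_top_subset Sg g s (by omega)
      have hS1ne : S1.Nonempty := Finset.card_pos.1 (by omega)
      obtain ⟨j0, hj0, hj0min⟩ := Finset.exists_min_image S1 (fun i => |g i|) hS1ne
      set B' := |g j0| with hB'
      have hB'0 : 0 ≤ B' := abs_nonneg _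
      -- decompose g
      have hdecomp : g = restr S1 g + restr S1ᶜ g := by
        funext i
        by_cases hi : i ∈ S1 <;> simp [restr, hi, Finset.mem_compl]
      -- bound on the complement part entries
      have hbound' : ∀ i, |restr S1ᶜ g i| ≤ B' := by
        intro i
        by_cases hi : i ∈ S1
        · have h0 : restr S1ᶜ g i = 0 := by simp [restr, Finset.mem_compl, hi]
          rw [h0]; simpa using hB'0
        · by_cases hgi : g i = 0
          · have h0 : restr S1ᶜ g i = 0 := by unfold restr; split <;> simp [hgi]
            rw [h0]; simpa using hB'0
          · have hiSg : i ∈ Sg \ S1 := by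
              rw [Finset.mem_sdiff, hSg]
              exact ⟨Finset.mem_filter.2 ⟨Finset.mem_univ _, hgi⟩, hi⟩
            have := htop j0 hj0 i hiSg
            simp only [restr, Finset.mem_compl, hi, if_pos]
            simpa using this
      -- supp0 of complement part decreases
      have hsupp_restr : supp0 (restr S1ᶜ g) ≤ supp0 g - s := by
        have : supp0 (restr S1ᶜ g) ≤ (Sg \ S1).card := by
          apply supp0_le_card
          intro i hi
          unfold restr at hi
          by_cases h1 : i ∈ S1ᶜ
          · rw [Finset.mem_sdiff]
            rw [Finset.mem_compl] at h1
            refine ⟨Finset.mem_filter.2 ⟨Finset.mem_univ _, ?_⟩, h1⟩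
            simpa [h1] using hi
          · simp [h1] at hi
        rw [Finset.card_sdiff_of_subset hS1sub, hSgcard, hS1card] at this
        exact this
      have hlt : supp0 g - s < M := by omega
      have hIH := ih _ hlt (restr S1ᶜ g) B' hsupp_restr hB'0 hbound'
      -- first part
      have hfirst : l2 (A.mulVec (restr S1 g)) ≤ Real.sqrt c * (Real.sqrt s * B) := by
        have h1 := rip_sqrt A hc (hRIP (restr S1 g) (by rw [← hS1card] at *; exact supp0_restr _ _))
        have h2 : l2 (restr S1 g) ≤ Real.sqrt s * B := by
          apply le_of_sq_le_sq' (mul_nonneg hsR.le hB) (l2_nonneg _)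
          rw [mul_pow, Real.sq_sqrt (Nat.cast_nonneg _), l2_sq_restr]
          calc ∑ i ∈ S1, (g i)^2 ≤ ∑ _i ∈ S1, B^2 := by
                apply Finset.sum_le_sum
                intro i _
                calc (g i)^2 = |g i|^2 := (sq_abs _).symm
                  _ ≤ B^2 := by nlinarith [hgB i, abs_nonneg (g i)]
            _ = (S1.card : ℝ) * B^2 := by rw [Finset.sum_const, nsmul_eq_mul]
            _ = (s:ℝ) * B^2 := by rw [hS1card]
        exact h1.trans (mul_le_mul_of_nonneg_left h2 hcR)
      -- B' relates to l1 of S1 part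
      have hB'l1 : Real.sqrt s * B' ≤ l1 (restr S1 g) / Real.sqrt s := by
        rw [le_div_iff₀ hsR]
        have : (s:ℝ) * B' ≤ l1 (restr S1 g) := by
          rw [l1_restr, ← hS1card, ← nsmul_eq_mul]
          exact Finset.card_nsmul_le_sum _ _ _ fun i hi => hj0min i hi
        calc Real.sqrt s * B' * Real.sqrt s = (s:ℝ) * B' := by
              rw [mul_comm (Real.sqrt s * B') (Real.sqrt s), ← mul_assoc,
                Real.mul_self_sqrt (Nat.cast_nonneg _)]
          _ ≤ l1 (restr S1 g) := this
      -- l1 additivity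
      have hl1add : l1 (restr S1 g) + l1 (restr S1ᶜ g) = l1 g := by
        unfold l1
        rw [← Finset.sum_add_distrib]
        apply Finset.sum_congr rfl
        intro i _
        by_cases hi : i ∈ S1 <;> simp [restr, hi, Finset.mem_compl]
      -- combine
      have htri : l2 (A.mulVec g) ≤ l2 (A.mulVec (restr S1 g)) + l2 (A.mulVec (restr S1ᶜ g)) := by
        conv_lhs => rw [hdecomp]
        rw [Matrix.mulVec_add]
        exact l2_add_le _ _
      have hIH' : l2 (A.mulVec (restr S1ᶜ g)) ≤
          Real.sqrt c * (l1 (restr S1 g) / Real.sqrt s + l1 (restr S1ᶜ g) / Real.sqrt s) := by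
        refine hIH.trans ?_
        apply mul_le_mul_of_nonneg_left _ hcR
        linarith
      calc l2 (A.mulVec g) ≤ l2 (A.mulVec (restr S1 g)) + l2 (A.mulVec (restr S1ᶜ g)) := htri
        _ ≤ Real.sqrt c * (Real.sqrt s * B) +
            Real.sqrt c * (l1 (restr S1 g) / Real.sqrt s + l1 (restr S1ᶜ g) / Real.sqrt s) := by
            exact add_le_add hfirst hIH'
        _ = Real.sqrt c * (Real.sqrt s * B + l1 g / Real.sqrt s) := by
            rw [← hl1add]
            field_simp

lemma l1_restr_ite {N : ℕ} (S : Finset (Fin N)) (x : Fin N → ℝ) :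
    (∑ j, if j ∈ S then |x j| else 0) = l1 (restr S x) := by
  rw [l1_restr, Finset.sum_ite_mem, Finset.univ_inter]

set_option maxHeartbeats 2000000 in
/-- Weighted ℓ₁ recovery error bound for the resilient observer with pruned support
prior (Theorem 2 of the paper). Measurements `y = Hx* + e`, attack `e` supported on
`T` with `|T| = km`, pruned prior `T̂η ⊇ T` with `|T̂η| = ρ·km`; `x̂` minimizes the
weighted ℓ₁ residual with weight `ω` on `T̂η` and `1` on `T̂ηᶜ`. Under the RIP on
`U₂ᵀ` of orders `a·km` and `(a+1)·km` and the condition `δ₁ + Cδ₂ < C − 1`,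
`‖x̂ − x*‖₂ ≤ (C₁/(σ̲√(km)))(ω σ_{km}(e) + (1−ω)‖e_{T̂ηᶜ}‖₁)`. -/
theorem stmt14 (Tw m n k a : ℕ) (N : ℕ) (hN : N = Tw * m) (hkm : 0 < k * m)
    (H : Matrix (Fin N) (Fin n) ℝ)
    (σmin : ℝ) (hσ : 0 < σmin)
    (hσmin : ∀ x : Fin n → ℝ, σmin * l2 x ≤ l2 (H.mulVec x))
    (U2 : Matrix (Fin N) (Fin (N - n)) ℝ)
    (hU2H : U2.transpose * H = 0)
    (δ1 δ2 : ℝ) (hδ1 : 0 ≤ δ1) (hδ2 : 0 ≤ δ2)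
    (hRIP1 : ∀ v : Fin N → ℝ, supp0 v ≤ a * (k * m) →
      (1 - δ1) * (l2 v) ^ 2 ≤ (l2 (U2.transpose.mulVec v)) ^ 2 ∧
        (l2 (U2.transpose.mulVec v)) ^ 2 ≤ (1 + δ1) * (l2 v) ^ 2)
    (hRIP2 : ∀ v : Fin N → ℝ, supp0 v ≤ (a + 1) * (k * m) →
      (1 - δ2) * (l2 v) ^ 2 ≤ (l2 (U2.transpose.mulVec v)) ^ 2 ∧
        (l2 (U2.transpose.mulVec v)) ^ 2 ≤ (1 + δ2) * (l2 v) ^ 2)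
    (T That : Finset (Fin N)) (hT : T.card = k * m) (hTThat : T ⊆ That)
    (ρ : ℝ) (hρ : ρ = (That.card : ℝ) / (k * m))
    (xstar : Fin n → ℝ) (e : Fin N → ℝ)
    (hesupp : ∀ i, e i ≠ 0 → i ∈ T)
    (y : Fin N → ℝ) (hy : y = H.mulVec xstar + e)
    (ω : ℝ) (hω0 : 0 ≤ ω) (hω1 : ω ≤ 1)
    (w : Fin N → ℝ) (hw : ∀ j, w j = if j ∈ That then ω else 1)
    (xhat : Fin n → ℝ)
    (hopt : ∀ z : Fin n → ℝ,
      ∑ j, w j * |y j - H.mulVec xhat j| ≤ ∑ j, w j * |y j - H.mulVec z j|)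
    (ha1 : 1 ≤ a) (ha2 : ρ - 1 ≤ (a : ℝ))
    (C C1 : ℝ)
    (hC : C = (a : ℝ) / (ω + (1 - ω) * Real.sqrt (ρ - 1)) ^ 2)
    (hcond : δ1 + C * δ2 < C - 1)
    (hC1 : C1 = 2 * (Real.sqrt a)⁻¹ * (Real.sqrt (1 - δ2) + Real.sqrt (1 + δ1)) /
      (Real.sqrt (1 - δ2) - (1 / C) * Real.sqrt (1 + δ1))) :
    l2 (fun i => xhat i - xstar i) ≤
      C1 / (σmin * Real.sqrt ((k : ℝ) * m)) *
        (ω * l1 (restr Tᶜ e) + (1 - ω) * l1 (restr Thatᶜ e)) := by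
  classical
  have eT : ∀ j, j ∉ T → e j = 0 := by
    intro j hj; by_contra hne; exact hj (hesupp j hne)
  have hl1T : l1 (restr Tᶜ e) = 0 := by
    rw [l1_restr]
    exact Finset.sum_eq_zero fun i hi => by rw [eT i (Finset.mem_compl.1 hi), abs_zero]
  have hl1That : l1 (restr Thatᶜ e) = 0 := by
    rw [l1_restr]
    exact Finset.sum_eq_zero fun i hi => by
      rw [eT i (fun hh => (Finset.mem_compl.1 hi) (hTThat hh)), abs_zero]
  rw [hl1T, hl1That]
  suffices hle : l2 (fun i => xhat i - xstar i) ≤ 0 by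
    calc l2 (fun i => xhat i - xstar i) ≤ 0 := hle
      _ = C1 / (σmin * Real.sqrt ((k : ℝ) * m)) * (ω * 0 + (1 - ω) * 0) := by ring
  set h : Fin n → ℝ := fun i => xhat i - xstar i with hh
  set f : Fin N → ℝ := H.mulVec h with hf
  set Km : ℝ := (k : ℝ) * m with hKm
  have hKm0 : (0:ℝ) < Km := by
    rw [hKm]
    have : ((k * m : ℕ) : ℝ) > 0 := by exact_mod_cast hkm
    push_cast at this
    linarith
  -- constants
  set d : ℝ := ω + (1 - ω) * Real.sqrt (ρ - 1) with hd
  have hd0 : 0 ≤ d := add_nonneg hω0 (mul_nonneg (by linarith) (Real.sqrt_nonneg _))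
  have haR : (0:ℝ) < a := by exact_mod_cast ha1
  have hdpos : 0 < d := by
    rcases hd0.lt_or_eq with h' | h'
    · exact h'
    · exfalso
      rw [← h'] at hC
      norm_num at hC
      rw [hC] at hcond
      linarith [hδ1, hδ2]
  have hCpos : 0 < C := by rw [hC]; exact div_pos haR (by positivity)
  have hC1' : 1 < C := by linarith [mul_nonneg hCpos.le hδ2, hδ1]
  have hδ2lt : δ2 < 1 := by
    have h1 : C * δ2 < C * 1 := by linarith [hδ1]
    exact (mul_lt_mul_iff_right₀ hCpos).1 h1
  have hkey : 1 + δ1 < C * (1 - δ2) := by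
    have h1 : C * (1 - δ2) = C - C * δ2 := by ring
    linarith
  have hkeyd : (1 + δ1) * d ^ 2 < (1 - δ2) * a := by
    have h2 : (0:ℝ) < d ^ 2 := by positivity
    rw [hC] at hkey
    calc (1 + δ1) * d ^ 2 < ((a:ℝ) / d ^ 2 * (1 - δ2)) * d ^ 2 :=
          mul_lt_mul_of_pos_right hkey h2
      _ = (1 - δ2) * a := by field_simp
  -- ρ facts
  have hρK : ρ * Km = That.card := by
    rw [hρ]; exact div_mul_cancel₀ _ hKm0.ne'
  have hTle : k * m ≤ That.card := hT ▸ Finset.card_le_card hTThat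
  have hTleR : Km ≤ (That.card : ℝ) := by
    have : ((k * m : ℕ) : ℝ) ≤ (That.card : ℝ) := by exact_mod_cast hTle
    push_cast at this; rw [hKm]; linarith
  have hρ1 : 1 ≤ ρ := by
    by_contra hcon
    push_neg at hcon
    have h1 : ρ * Km < 1 * Km := mul_lt_mul_of_pos_right hcon hKm0
    rw [one_mul, hρK] at h1
    linarith [hTleR]
  have hsdT : ((That \ T).card : ℝ) = (ρ - 1) * Km := by
    rw [Finset.card_sdiff_of_subset hTThat, hT, Nat.cast_sub hTle]
    push_cast
    rw [sub_mul, one_mul, hρK, hKm]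
  -- algebra facts about U2ᵀ f
  have hU2f : U2.transpose.mulVec f = 0 := by
    rw [hf, Matrix.mulVec_mulVec, hU2H, Matrix.zero_mulVec]
  have hfun : h = xhat - xstar := rfl
  have hfsub : f = H.mulVec xhat - H.mulVec xstar := by
    rw [hf, hfun, Matrix.mulVec_sub]
  have hres : ∀ j, y j - H.mulVec xhat j = e j - f j := by
    intro j
    rw [hy, hfsub]
    simp only [Pi.add_apply, Pi.sub_apply]
    ring
  -- cone condition
  have hopt' : ∑ j, w j * |e j - f j| ≤ ∑ j, w j * |e j| := by
    have h0 := hopt xstar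
    calc ∑ j, w j * |e j - f j| = ∑ j, w j * |y j - H.mulVec xhat j| := by
          exact Finset.sum_congr rfl fun j _ => by rw [hres j]
      _ ≤ ∑ j, w j * |y j - H.mulVec xstar j| := h0
      _ = ∑ j, w j * |e j| := by
          exact Finset.sum_congr rfl fun j _ => by rw [hy]; simp
  have hpt : ∀ j, -(ω * (if j ∈ T then |f j| else 0)) + ω * (if j ∈ That \ T then |f j| else 0)
      + (if j ∈ Thatᶜ then |f j| else 0) ≤ w j * |e j - f j| - w j * |e j| := by
    intro j
    rw [hw j]
    by_cases h1 : j ∈ T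
    · have h2 : j ∈ That := hTThat h1
      have h3 : |e j| - |f j| ≤ |e j - f j| := abs_sub_abs_le_abs_sub _ _
      have h4 : ω * (|e j| - |f j|) ≤ ω * |e j - f j| := mul_le_mul_of_nonneg_left h3 hω0
      simp only [h1, h2, if_pos, if_true, Finset.mem_sdiff, Finset.mem_compl, not_true,
        and_false, if_false, not_false_iff]
      simp [h1]
      nlinarith
    · have hej : e j = 0 := eT j h1
      by_cases h2 : j ∈ That
      · simp [h1, h2, hej, Finset.mem_sdiff, Finset.mem_compl, zero_sub, abs_neg]
      · simp [h1, h2, hej, Finset.mem_sdiff, Finset.mem_compl, zero_sub, abs_neg]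
  have hcone : ω * l1 (restr (That \ T) f) + l1 (restr Thatᶜ f) ≤ ω * l1 (restr T f) := by
    have hsum := Finset.sum_le_sum (fun j (_ : j ∈ Finset.univ) => hpt j)
    rw [Finset.sum_sub_distrib] at hsum
    have hL : (∑ j, (-(ω * (if j ∈ T then |f j| else 0)) + ω * (if j ∈ That \ T then |f j| else 0)
        + (if j ∈ Thatᶜ then |f j| else 0)))
        = -(ω * l1 (restr T f)) + ω * l1 (restr (That \ T) f) + l1 (restr Thatᶜ f) := by
      rw [Finset.sum_add_distrib, Finset.sum_add_distrib, Finset.sum_neg_distrib,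
        ← Finset.mul_sum, ← Finset.mul_sum, l1_restr_ite, l1_restr_ite, l1_restr_ite]
    rw [hL] at hsum
    linarith
  -- top subset of Tᶜ
  set s : ℕ := a * (k * m) with hs
  have hs1 : 1 ≤ s := by
    rw [hs]
    exact Nat.one_le_iff_ne_zero.2 (Nat.mul_ne_zero (by omega) (by omega))
  have hsKm : ((s : ℕ) : ℝ) = (a : ℝ) * Km := by
    rw [hs, hKm]; push_cast; ring
  obtain ⟨T1, hT1sub, hT1card, htop⟩ := exists_top_subset Tᶜ f (min s Tᶜ.card) (min_le_right _ _)
  set b : Fin N → ℝ := restr (T ∪ T1) f with hb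
  set g : Fin N → ℝ := restr ((T ∪ T1)ᶜ) f with hg
  have hfbg : f = b + g := by
    funext i
    rw [hb, hg]
    simp only [Pi.add_apply]
    unfold restr
    by_cases hi : i ∈ T ∪ T1
    · rw [if_pos hi, if_neg (fun hc => (Finset.mem_compl.1 hc) hi), add_zero]
    · rw [if_neg hi, if_pos (Finset.mem_compl.2 hi), zero_add]
  have hU2bg : l2 (U2.transpose.mulVec b) = l2 (U2.transpose.mulVec g) := by
    have h0 : U2.transpose.mulVec b + U2.transpose.mulVec g = 0 := by
      rw [← Matrix.mulVec_add, ← hfbg, hU2f]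
    have h1 : U2.transpose.mulVec b = fun i => -(U2.transpose.mulVec g i) := by
      funext i
      have h2 := congrFun h0 i
      simp only [Pi.add_apply, Pi.zero_apply] at h2
      linarith
    rw [h1, l2_neg]
  have hcardb : (T ∪ T1).card ≤ (a + 1) * (k * m) := by
    calc (T ∪ T1).card ≤ T.card + T1.card := Finset.card_union_le _ _
      _ ≤ k * m + s := by rw [hT, hT1card]; omega
      _ = (a + 1) * (k * m) := by rw [hs]; ring
  have hbody := (hRIP2 b (le_trans (supp0_restr _ _) hcardb)).1
  set L : ℝ := l1 (restr Tᶜ f) with hLdef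
  have hL0 : 0 ≤ L := l1_nonneg _
  have hsq : (0:ℝ) < Real.sqrt s := Real.sqrt_pos.2 (by exact_mod_cast hs1)
  -- tail bound
  have htail : l2 (U2.transpose.mulVec g) ≤ Real.sqrt (1 + δ1) * L / Real.sqrt s := by
    rcases lt_or_ge Tᶜ.card s with hlt | hge
    · have hT1 : T1 = Tᶜ := Finset.eq_of_subset_of_card_le hT1sub (by omega)
      have hcompl : ((T ∪ T1)ᶜ : Finset (Fin N)) = ∅ := by
        rw [hT1, Finset.union_compl, Finset.compl_univ]
      have hg0 : g = fun _ => (0:ℝ) := by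
        funext i; rw [hg, hcompl]; simp [restr]
      have : U2.transpose.mulVec g = 0 := by
        rw [hg0]
        have : (fun _ : Fin N => (0:ℝ)) = (0 : Fin N → ℝ) := rfl
        rw [this, Matrix.mulVec_zero]
      rw [this]
      have hz : l2 (0 : Fin (N - n) → ℝ) = 0 := by simp [l2]
      rw [hz]
      exact div_nonneg (mul_nonneg (Real.sqrt_nonneg _) hL0) (Real.sqrt_nonneg _)
    · have hT1s : T1.card = s := by omega
      have hT1ne : T1.Nonempty := Finset.card_pos.1 (by omega)
      obtain ⟨j0, hj0, hj0min⟩ := Finset.exists_min_image T1 (fun i => |f i|) hT1ne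
      set B : ℝ := |f j0| with hB
      have hgB : ∀ i, |g i| ≤ B := by
        intro i
        by_cases hi : i ∈ (T ∪ T1)ᶜ
        · have hiT : i ∈ Tᶜ \ T1 := by
            rw [Finset.mem_compl, Finset.mem_union] at hi
            push_neg at hi
            rw [Finset.mem_sdiff, Finset.mem_compl]
            exact ⟨hi.1, hi.2⟩
          have h2 := htop j0 hj0 i hiT
          have h3 : g i = f i := by rw [hg]; unfold restr; rw [if_pos hi]
          rw [h3]; exact h2
        · have h3 : g i = 0 := by rw [hg]; unfold restr; rw [if_neg hi]
          rw [h3, abs_zero]; exact abs_nonneg _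
      have htb := tail_bound U2.transpose (1 + δ1) (by linarith) s hs1
        (fun v hv => (hRIP1 v hv).2) (supp0 g) g B le_rfl (abs_nonneg _) hgB
      have hBl1 : Real.sqrt s * B ≤ l1 (restr T1 f) / Real.sqrt s := by
        rw [le_div_iff₀ hsq]
        have h1 : (s:ℝ) * B ≤ l1 (restr T1 f) := by
          rw [l1_restr, ← hT1s, ← nsmul_eq_mul]
          exact Finset.card_nsmul_le_sum _ _ _ fun i hi => hj0min i hi
        calc Real.sqrt s * B * Real.sqrt s = (s:ℝ) * B := by
              rw [mul_comm _ (Real.sqrt s), ← mul_assoc, Real.mul_self_sqrt (Nat.cast_nonneg _)]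
          _ ≤ _ := h1
      have hl1L : l1 (restr T1 f) + l1 g = L := by
        rw [hg, hLdef]
        unfold l1
        rw [← Finset.sum_add_distrib]
        refine Finset.sum_congr rfl fun i _ => ?_
        rw [abs_restr, abs_restr, abs_restr]
        by_cases h1 : i ∈ T1
        · have h2 : i ∈ Tᶜ := hT1sub h1
          have h3 : i ∉ ((T ∪ T1)ᶜ : Finset (Fin N)) := by
            simp [Finset.mem_compl, Finset.mem_union, h1]
          simp [h1, h2, h3]
        · by_cases h2 : i ∈ T
          · have h3 : i ∉ (Tᶜ : Finset (Fin N)) := by simp [h2]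
            have h4 : i ∉ ((T ∪ T1)ᶜ : Finset (Fin N)) := by
              simp [Finset.mem_compl, Finset.mem_union, h2]
            simp [h1, h3, h4]
          · have h3 : i ∈ (Tᶜ : Finset (Fin N)) := by simp [h2]
            have h4 : i ∈ ((T ∪ T1)ᶜ : Finset (Fin N)) := by
              simp [Finset.mem_compl, Finset.mem_union, h1, h2]
            simp [h1, h3, h4]
      calc l2 (U2.transpose.mulVec g)
          ≤ Real.sqrt (1 + δ1) * (Real.sqrt s * B + l1 g / Real.sqrt s) := htb
        _ ≤ Real.sqrt (1 + δ1) * (l1 (restr T1 f) / Real.sqrt s + l1 g / Real.sqrt s) := by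
            apply mul_le_mul_of_nonneg_left _ (Real.sqrt_nonneg _)
            linarith
        _ = Real.sqrt (1 + δ1) * L / Real.sqrt s := by
            rw [← hl1L]; field_simp
  -- step 9 : L ≤ √Km * d * l2 b
  have hstep9 : L ≤ Real.sqrt Km * d * l2 b := by
    have hsplit : L = l1 (restr (That \ T) f) + l1 (restr Thatᶜ f) := by
      rw [hLdef]
      unfold l1
      rw [← Finset.sum_add_distrib]
      refine Finset.sum_congr rfl fun i _ => ?_
      rw [abs_restr, abs_restr, abs_restr]
      by_cases h1 : i ∈ T
      · have h2 : i ∈ That := hTThat h1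
        simp [h1, h2, Finset.mem_sdiff, Finset.mem_compl]
      · by_cases h2 : i ∈ That
        · simp [h1, h2, Finset.mem_sdiff, Finset.mem_compl]
        · simp [h1, h2, Finset.mem_sdiff, Finset.mem_compl]
    -- l1 T bound
    have hTb : l1 (restr T f) ≤ Real.sqrt Km * l2 b := by
      calc l1 (restr T f) ≤ Real.sqrt T.card * l2 (restr T f) := l1_restr_le _ _
        _ ≤ Real.sqrt Km * l2 b := by
            apply mul_le_mul
            · rw [hT]
              apply Real.sqrt_le_sqrt
              rw [hKm]; push_cast; linarith
            · exact l2_restr_mono Finset.subset_union_left f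
            · exact l2_nonneg _
            · exact Real.sqrt_nonneg _
    -- l1 That\T bound
    have hcard1 : (That \ T).card ≤ T1.card := by
      rw [hT1card]
      apply le_min
      · have h1 : ((That \ T).card : ℝ) ≤ (s:ℝ) := by
          rw [hsdT, hsKm]
          exact mul_le_mul_of_nonneg_right ha2 hKm0.le
        exact_mod_cast h1
      · apply Finset.card_le_card
        intro i hi
        rw [Finset.mem_sdiff] at hi
        rw [Finset.mem_compl]
        exact hi.2
    have hdom : l2 (restr (That \ T) f) ≤ l2 (restr T1 f) := by
      apply le_of_sq_le_sq' (l2_nonneg _) (l2_nonneg _)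
      rw [l2_sq_restr, l2_sq_restr]
      apply sum_sq_dominate f Tᶜ _ _ _ hcard1 htop
      intro i hi
      rw [Finset.mem_sdiff] at hi
      rw [Finset.mem_compl]
      exact hi.2
    have hsT : Real.sqrt ((That \ T).card) = Real.sqrt (ρ - 1) * Real.sqrt Km := by
      rw [hsdT, Real.sqrt_mul (by linarith)]
    have hTdb : l1 (restr (That \ T) f) ≤ Real.sqrt (ρ - 1) * Real.sqrt Km * l2 b := by
      calc l1 (restr (That \ T) f)
          ≤ Real.sqrt ((That \ T).card) * l2 (restr (That \ T) f) := l1_restr_le _ _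
        _ = Real.sqrt (ρ - 1) * Real.sqrt Km * l2 (restr (That \ T) f) := by rw [hsT]
        _ ≤ Real.sqrt (ρ - 1) * Real.sqrt Km * l2 b := by
            apply mul_le_mul_of_nonneg_left _ (by positivity)
            exact hdom.trans (l2_restr_mono Finset.subset_union_right f)
    have hLb : L ≤ ω * l1 (restr T f) + (1 - ω) * l1 (restr (That \ T) f) := by
      rw [hsplit]
      linarith [hcone]
    have h1 : ω * l1 (restr T f) ≤ ω * (Real.sqrt Km * l2 b) :=
      mul_le_mul_of_nonneg_left hTb hω0
    have h2 : (1 - ω) * l1 (restr (That \ T) f)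
        ≤ (1 - ω) * (Real.sqrt (ρ - 1) * Real.sqrt Km * l2 b) :=
      mul_le_mul_of_nonneg_left hTdb (by linarith)
    have h3 : Real.sqrt Km * d * l2 b
        = ω * (Real.sqrt Km * l2 b) + (1 - ω) * (Real.sqrt (ρ - 1) * Real.sqrt Km * l2 b) := by
      rw [hd]; ring
    linarith
  -- final chain
  have hs0 : (0:ℝ) < (s:ℝ) := by exact_mod_cast hs1
  have hbodysq : (1 - δ2) * (l2 b) ^ 2 ≤ (1 + δ1) * L ^ 2 / (s:ℝ) := by
    have h1 : (l2 (U2.transpose.mulVec g)) ^ 2 ≤ (Real.sqrt (1 + δ1) * L / Real.sqrt s) ^ 2 :=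
      pow_le_pow_left₀ (l2_nonneg _) htail 2
    rw [div_pow, mul_pow, Real.sq_sqrt (by linarith : (0:ℝ) ≤ 1 + δ1),
      Real.sq_sqrt (Nat.cast_nonneg _)] at h1
    calc (1 - δ2) * (l2 b) ^ 2 ≤ (l2 (U2.transpose.mulVec b)) ^ 2 := hbody
      _ = (l2 (U2.transpose.mulVec g)) ^ 2 := by rw [hU2bg]
      _ ≤ (1 + δ1) * L ^ 2 / (s:ℝ) := h1
  have hLsq : L ^ 2 ≤ Km * d ^ 2 * (l2 b) ^ 2 := by
    have h1 := pow_le_pow_left₀ hL0 hstep9 2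
    rw [mul_pow, mul_pow, Real.sq_sqrt hKm0.le] at h1
    exact h1
  have hXle : (l2 b) ^ 2 ≤ 0 := by
    by_contra hX
    push_neg at hX
    have h3 : (1 - δ2) * (l2 b) ^ 2 * (s:ℝ) ≤ (1 + δ1) * L ^ 2 := by
      rw [← le_div_iff₀ hs0]
      exact hbodysq
    rw [hsKm] at h3
    have h4 : (1 + δ1) * L ^ 2 ≤ (1 + δ1) * (Km * d ^ 2 * (l2 b) ^ 2) :=
      mul_le_mul_of_nonneg_left hLsq (by linarith)
    have h5 := mul_lt_mul_of_pos_right hkeyd (mul_pos hKm0 hX)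
    linarith only [h3, h4, h5]
  have hlb : l2 b = 0 := by
    have h1 : (l2 b) ^ 2 = 0 := le_antisymm hXle (sq_nonneg _)
    exact pow_eq_zero_iff (two_ne_zero) |>.1 h1
  have hLz : L = 0 := by
    have h1 := hstep9
    rw [hlb, mul_zero] at h1
    linarith
  have hf0 : ∀ j, f j = 0 := by
    intro j
    by_cases hj : j ∈ T ∪ T1
    · have h1 : ∑ i ∈ T ∪ T1, (f i) ^ 2 = 0 := by
        rw [← l2_sq_restr, ← hb, hlb]; ring
      have h2 := (Finset.sum_eq_zero_iff_of_nonneg (fun i _ => sq_nonneg (f i))).1 h1 j hj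
      exact pow_eq_zero_iff (two_ne_zero) |>.1 h2
    · have hjc : j ∈ (Tᶜ : Finset (Fin N)) := by
        rw [Finset.mem_compl]
        intro hcontra
        exact hj (Finset.mem_union_left _ hcontra)
      have h1 : |f j| ≤ L := by
        rw [hLdef, l1_restr]
        exact Finset.single_le_sum (fun i _ => abs_nonneg (f i)) hjc
      rw [hLz] at h1
      exact abs_eq_zero.1 (le_antisymm h1 (abs_nonneg _))
  have hfz : l2 f = 0 := by
    have h1 : (∑ i, (f i) ^ 2) = 0 :=
      Finset.sum_eq_zero fun i _ => by rw [hf0 i]; ring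
    unfold l2
    rw [h1, Real.sqrt_zero]
  have hσh := hσmin h
  rw [← hf, hfz] at hσh
  by_contra hcon
  push_neg at hcon
  linarith only [hσh, mul_pos hσ hcon]
end
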